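/- Let A be an n×n complex matrix, d ≥ 2 an integer, and suppose the polynomial map f(x) = x + (Ax)^d (d-th power applied entrywise) has Jacobian determinant identically 1. Then (Aᵀ)^{⊙(d−1)} · diag(A) = 0, where ⊙ denotes the Hadamard power and diag(A) is the vector of diagonal entries; equivalently, for every j = 1,…,n, ∑_{k=1}^n a_{kj}^{d−1} a_{kk} = 0. -/

import Mathlib

open Matrix BigOperators

/-- Jacobian determinant of a map `f : ℂ^ι → ℂ^ι` at `x`. -/
noncomputable def jacDet {ι : Type*} [Fintype ι] [DecidableEq ι]
    (f : (ι → ℂ) → (ι → ℂ)) (x : ι → ℂ) : ℂ :=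
  (LinearMap.toMatrix (Pi.basisFun ℂ ι) (Pi.basisFun ℂ ι)
    (fderiv ℂ f x).toLinearMap).det

/-- The map `x ↦ x + φ(Ax)`, with `φ` applied entrywise. -/
noncomputable def phiMap {ι : Type*} [Fintype ι] (A : Matrix ι ι ℂ) (φ : ℂ → ℂ)
    (x : ι → ℂ) : ι → ℂ :=
  fun j => x j + φ (A.mulVec x j)

/-- Domain of definition of `x ↦ x + φ(Ax)` for `φ` defined on `Ω`. -/
def phiDom {ι : Type*} [Fintype ι] (A : Matrix ι ι ℂ) (Ω : Set ℂ) : Set (ι → ℂ) :=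
  {x | ∀ j, A.mulVec x j ∈ Ω}

/-- `(A, φ)` is a good pair: the Jacobian of `x + φ(Ax)` is identically a nonzero constant. -/
def IsGoodPair {ι : Type*} [Fintype ι] [DecidableEq ι]
    (A : Matrix ι ι ℂ) (Ω : Set ℂ) (φ : ℂ → ℂ) : Prop :=
  ∃ c : ℂ, c ≠ 0 ∧ ∀ x ∈ phiDom A Ω, jacDet (phiMap A φ) x = c

/-- A matrix is universal if it forms a good pair with every analytic function. -/
def IsUniversal {ι : Type*} [Fintype ι] [DecidableEq ι] (A : Matrix ι ι ℂ) : Prop :=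
  ∀ (Ω : Set ℂ) (φ : ℂ → ℂ), IsOpen Ω → Ω.Nonempty → IsPreconnected Ω →
    AnalyticOn ℂ φ Ω → (phiDom A Ω).Nonempty → IsGoodPair A Ω φ

/-- The principal minor of `A` indexed by `I`. -/
noncomputable def principalMinor {ι : Type*} [DecidableEq ι] (A : Matrix ι ι ℂ)
    (I : Finset ι) : ℂ :=
  (A.submatrix (fun i : I => (i : ι)) (fun i : I => (i : ι))).det

lemma hasFDerivAt_aux (n : ℕ) (A : Matrix (Fin n) (Fin n) ℂ) (d : ℕ) (x : Fin n → ℂ) :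
    HasFDerivAt (fun y (j : Fin n) => y j + (A.mulVec y j) ^ d)
      (LinearMap.toContinuousLinearMap
        ((1 + (d : ℂ) • (Matrix.diagonal (fun k => (A.mulVec x k) ^ (d - 1)) * A)).mulVecLin)) x := by
  rw [hasFDerivAt_pi']
  intro j
  have hlin : HasFDerivAt (fun y => A.mulVec y j)
      ((ContinuousLinearMap.proj j).comp (LinearMap.toContinuousLinearMap A.mulVecLin)) x :=
    ((ContinuousLinearMap.proj j).comp (LinearMap.toContinuousLinearMap A.mulVecLin)).hasFDerivAt
  have hpow := (hasDerivAt_pow d (A.mulVec x j)).comp_hasFDerivAt x hlin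
  have hsum := ((ContinuousLinearMap.proj j (R := ℂ) (φ := fun _ : Fin n => ℂ)).hasFDerivAt
      (x := x)).add hpow
  convert hsum using 1
  · rfl
  ext v
  simp only [ContinuousLinearMap.coe_comp', ContinuousLinearMap.add_apply,
    ContinuousLinearMap.coe_smul', Pi.smul_apply, Function.comp_apply,
    ContinuousLinearMap.proj_apply, LinearMap.coe_toContinuousLinearMap, LinearMap.coe_toContinuousLinearMap',
    Matrix.mulVecLin_apply]
  rw [Matrix.add_mulVec, Matrix.smul_mulVec, Matrix.one_mulVec]
  simp only [Pi.add_apply, Pi.smul_apply, smul_eq_mul]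
  rw [← Matrix.mulVec_mulVec, Matrix.mulVec_diagonal]
  ring

lemma jacDet_eq (n : ℕ) (A : Matrix (Fin n) (Fin n) ℂ) (d : ℕ) (x : Fin n → ℂ) :
    jacDet (fun y j => y j + (A.mulVec y j) ^ d) x =
      (1 + (d : ℂ) • (Matrix.diagonal (fun k => (A.mulVec x k) ^ (d - 1)) * A)).det := by
  unfold jacDet
  rw [(hasFDerivAt_aux n A d x).fderiv]
  congr 1
  rw [LinearMap.toMatrix_eq_toMatrix']
  rw [show (LinearMap.toContinuousLinearMap
        ((1 + (d : ℂ) • (Matrix.diagonal (fun k => (A.mulVec x k) ^ (d - 1)) * A)).mulVecLin)).toLinearMap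
      = (1 + (d : ℂ) • (Matrix.diagonal (fun k => (A.mulVec x k) ^ (d - 1)) * A)).mulVecLin
    from rfl]
  rw [← Matrix.toLin'_apply', LinearMap.toMatrix'_toLin']

theorem stmt14 (n : ℕ) (A : Matrix (Fin n) (Fin n) ℂ) (d : ℕ) (hd : 2 ≤ d)
    (hjac : ∀ x : Fin n → ℂ, jacDet (fun y j => y j + (A.mulVec y j) ^ d) x = 1) :
    ∀ j, ∑ k, A k j ^ (d - 1) * A k k = 0 := by
  intro j
  set B : Matrix (Fin n) (Fin n) ℂ :=
    Matrix.diagonal (fun k => A k j ^ (d - 1)) * A with hB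
  have htr : B.trace = ∑ k, A k j ^ (d - 1) * A k k := by
    simp [hB, Matrix.trace, Matrix.diag, Matrix.mul_apply, Matrix.diagonal, ite_mul]
  have hdne : (d : ℂ) ≠ 0 := by
    exact_mod_cast Nat.cast_ne_zero.mpr (by omega)
  have hdet : ∀ s : ℂ, (1 + s • B).det = 1 := by
    intro s
    obtain ⟨t, ht⟩ := IsAlgClosed.exists_pow_nat_eq (k := ℂ) (s / d) (n := d - 1) (by omega)
    have h := hjac (t • (Pi.single j 1 : Fin n → ℂ))
    rw [jacDet_eq] at h
    have hmv : ∀ k, A.mulVec (t • (Pi.single j 1 : Fin n → ℂ)) k = t * A k j := by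
      intro k
      rw [Matrix.mulVec_smul]
      simp [Matrix.mulVec_single]
    have hx : (fun k => (A.mulVec (t • (Pi.single j 1 : Fin n → ℂ)) k) ^ (d - 1))
        = t ^ (d - 1) • (fun k => A k j ^ (d - 1)) := by
      funext k
      simp [hmv k, mul_pow]
    rw [hx, Matrix.diagonal_smul, Matrix.smul_mul, smul_smul, ht,
      mul_div_cancel₀ _ hdne] at h
    exact h
  have key : ∀ s : ℂ, Polynomial.eval s
      (Polynomial.C B.trace * Polynomial.X
        + ((1 + (Polynomial.X : Polynomial ℂ) • B.map Polynomial.C).det).divX.divX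
          * Polynomial.X ^ 2) = 0 := by
    intro s
    have h := hdet s
    rw [Matrix.det_one_add_smul] at h
    simp only [Polynomial.eval_add, Polynomial.eval_mul, Polynomial.eval_C, Polynomial.eval_X,
      Polynomial.eval_pow]
    linear_combination h
  have hp := Polynomial.zero_of_eval_zero _ key
  have hc := congrArg (fun p => Polynomial.coeff p 1) hp
  simp only [Polynomial.coeff_add, Polynomial.coeff_C_mul, Polynomial.coeff_X_one, mul_one,
    Polynomial.coeff_mul_X_pow', Polynomial.coeff_zero] at hc
  rw [← htr]
  simpa using hc
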